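/- Let (A, B, C) be a recollement of abelian categories admitting a ladder of l-height three. Then e : B ⥤ C preserves Gorenstein injective objects. -/

import Mathlib

open CategoryTheory CategoryTheory.Limits

universe v₁ v₂ v₃ u₁ u₂ u₃

/-- A recollement of abelian categories `(A, B, C)`: adjoint triples `(q, i, p)` and
`(l, e, r)` with `i`, `l`, `r` fully faithful and the essential image of `i` equal to
the kernel of `e`. -/
structure AbRecollement (A : Type u₁) (B : Type u₂) (C : Type u₃)
    [Category.{v₁} A] [Category.{v₂} B] [Category.{v₃} C]
    [Abelian A] [Abelian B] [Abelian C] where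
  i : A ⥤ B
  e : B ⥤ C
  q : B ⥤ A
  p : B ⥤ A
  l : C ⥤ B
  r : C ⥤ B
  adj_qi : q ⊣ i
  adj_ip : i ⊣ p
  adj_le : l ⊣ e
  adj_er : e ⊣ r
  i_full : i.Full
  i_faithful : i.Faithful
  l_full : l.Full
  l_faithful : l.Faithful
  r_full : r.Full
  r_faithful : r.Faithful
  essImage_i_eq_ker_e : ∀ X : B, i.essImage X ↔ Limits.IsZero (e.obj X)

universe v u

/-- An object `X` of an abelian category is **Gorenstein projective** if it is the
cokernel of a differential in a totally acyclic complex of projectives, i.e. an acyclic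
complex `P•` of projectives such that `Hom(P•, Q)` is acyclic for every projective `Q`. -/
def IsGorensteinProjective {A : Type u} [Category.{v} A] [Abelian A] (X : A) : Prop :=
  ∃ P : CochainComplex A ℤ,
    (∀ n, Projective (P.X n)) ∧
    (∀ n, P.ExactAt n) ∧
    (∀ (Q : A), Projective Q → ∀ n,
      (((preadditiveYoneda.obj Q).mapHomologicalComplex _).obj P.op).ExactAt n) ∧
    Nonempty (X ≅ Limits.cokernel (P.d (-1) 0))

/-- An object `X` of an abelian category is **Gorenstein injective** if it is the kernel
of a differential in a totally acyclic complex of injectives, i.e. an acyclic complex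
`I•` of injectives such that `Hom(E, I•)` is acyclic for every injective `E`. -/
def IsGorensteinInjective {A : Type u} [Category.{v} A] [Abelian A] (X : A) : Prop :=
  ∃ I : CochainComplex A ℤ,
    (∀ n, Injective (I.X n)) ∧
    (∀ n, I.ExactAt n) ∧
    (∀ (E : A), Injective E → ∀ n,
      (((preadditiveCoyoneda.obj (Opposite.op E)).mapHomologicalComplex _).obj I).ExactAt n) ∧
    Nonempty (X ≅ Limits.kernel (I.d 0 1))

/-- Let `(A, B, C)` be a recollement of abelian categories admitting a
ladder of `l`-height three.  Then `e : B ⥤ C` preserves Gorenstein injective objects. -/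
theorem ladder_l_height_three_e_preserves_gorensteinInjective
    {A : Type u₁} {B : Type u₂} {C : Type u₃}
    [Category.{v₁} A] [Category.{v₂} B] [Category.{v₃} C]
    [Abelian A] [Abelian B] [Abelian C]
    [EnoughInjectives B] [EnoughInjectives C]
    (R : AbRecollement A B C)
    (l₁ : B ⥤ C) (l₂ : C ⥤ B)
    (adj₂₁ : l₂ ⊣ l₁) (adj₁₀ : l₁ ⊣ R.l) :
    ∀ X : B, IsGorensteinInjective X → IsGorensteinInjective (R.e.obj X) := by
  -- basic adjunction instances
  haveI := R.adj_le.isRightAdjoint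
  haveI := R.adj_le.isLeftAdjoint
  haveI epl : PreservesLimitsOfSize.{0,0} R.e := R.adj_le.rightAdjoint_preservesLimits
  haveI epc : PreservesColimitsOfSize.{0,0} R.e := R.adj_er.leftAdjoint_preservesColimits
  haveI : PreservesFiniteLimits R.e := ⟨fun _ _ _ => inferInstance⟩
  haveI : PreservesFiniteColimits R.e := ⟨fun _ _ _ => inferInstance⟩
  haveI : R.e.Additive := Functor.additive_of_preserves_binary_products _
  haveI lpl : PreservesLimitsOfSize.{0,0} R.l := adj₁₀.rightAdjoint_preservesLimits
  haveI : R.l.PreservesMonomorphisms := inferInstance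
  haveI : R.l.Additive := Functor.additive_of_preserves_binary_products _
  haveI l1pl : PreservesLimitsOfSize.{0,0} l₁ := adj₂₁.rightAdjoint_preservesLimits
  haveI : l₁.PreservesMonomorphisms := inferInstance
  intro X hX
  obtain ⟨I, hinj, hex, htot, ⟨φ⟩⟩ := hX
  refine ⟨(R.e.mapHomologicalComplex (ComplexShape.up ℤ)).obj I, fun n => ?_, fun n => ?_,
    fun E hE n => ?_, ?_⟩
  · haveI := hinj n
    exact Injective.injective_of_adjoint R.adj_le (I.X n)
  · exact (hex n).map R.e
  · haveI := hE
    haveI : Injective (R.l.obj E) := Injective.injective_of_adjoint adj₁₀ E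
    have hT := htot (R.l.obj E) this n
    rw [HomologicalComplex.exactAt_iff, ShortComplex.ab_exact_iff] at hT ⊢
    intro x₂ hx₂
    change E ⟶ R.e.obj (I.X n) at x₂
    set m := (ComplexShape.up ℤ).prev n with hm
    set n' := (ComplexShape.up ℤ).next n with hn'
    have hx₂' : (x₂ : E ⟶ R.e.obj (I.X n)) ≫ R.e.map (I.d n n') = 0 := hx₂
    have hy₂ : ((R.adj_le.homEquiv E (I.X n)).symm x₂) ≫ I.d n n' = 0 := by
      rw [← Adjunction.homEquiv_naturality_right_symm, hx₂']
      simp [Adjunction.homEquiv_counit]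
    obtain ⟨y₁, hy₁⟩ := hT ((R.adj_le.homEquiv E (I.X n)).symm x₂) hy₂
    change R.l.obj E ⟶ I.X m at y₁
    refine ⟨R.adj_le.homEquiv E (I.X m) y₁, ?_⟩
    have hy₁' : (y₁ : R.l.obj E ⟶ I.X m) ≫ I.d m n = (R.adj_le.homEquiv E (I.X n)).symm x₂ := hy₁
    show (R.adj_le.homEquiv E (I.X m) y₁) ≫ R.e.map (I.d m n) = x₂
    rw [← Adjunction.homEquiv_naturality_right, hy₁', Equiv.apply_symm_apply]
  · exact ⟨R.e.mapIso φ ≪≫ PreservesKernel.iso R.e (I.d 0 1)⟩
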